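/- Suppose w : [0,R) → ℝ is C¹ on [0,R), C² on (0,R), with w(0) = α > 0, w'(0) = 0, w' ≥ 0, w(r) → ∞ as r → R⁻, and satisfies ((w')^{p-1})' ≤ M · h(w) on (0,R) for constants M > 0, p > 1 and a nonnegative continuous function h. Then ∫_α^∞ (∫₀^t h(s) ds)^{-1/p} dt ≤ (M p/(p-1))^{1/p} R < ∞. -/

import Mathlib

open MeasureTheory Set Filter
open scoped Topology

theorem stmt14 (p R M α : ℝ) (hp : 1 < p) (hR : 0 < R) (hM : 0 < M) (hα : 0 < α)
    (h : ℝ → ℝ) (hh : Continuous h) (hhnn : ∀ s, 0 ≤ h s)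
    (w w' d : ℝ → ℝ)
    (hw0 : w 0 = α) (hw'0 : w' 0 = 0)
    (hw : ∀ r ∈ Set.Ico (0:ℝ) R, HasDerivAt w (w' r) r)
    (hw'nn : ∀ r ∈ Set.Ico (0:ℝ) R, 0 ≤ w' r)
    (hd : ∀ r ∈ Set.Ioo (0:ℝ) R, HasDerivAt (fun r => (w' r) ^ (p-1)) (d r) r)
    (hdle : ∀ r ∈ Set.Ioo (0:ℝ) R, d r ≤ M * h (w r))
    (hblow : Filter.Tendsto w (nhdsWithin R (Set.Iio R)) Filter.atTop) :
    (∫⁻ t in Set.Ioi α, ENNReal.ofReal ((∫ s in (0:ℝ)..t, h s) ^ (-(1/p)))) ≤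
      ENNReal.ofReal ((M * p / (p-1)) ^ (1/p) * R) := by
  have hp0 : (0:ℝ) < p := lt_trans one_pos hp
  have hp1 : (0:ℝ) < p - 1 := sub_pos.2 hp
  set q : ℝ := p / (p - 1) with hq
  have hq1 : 1 < q := (one_lt_div hp1).2 (by linarith)
  have hq0 : 0 < q := lt_trans one_pos hq1
  have hpq1 : (p - 1) * q = p := by rw [hq]; field_simp
  have hpq2 : (p - 1) * (q - 1) = 1 := by rw [hq]; field_simp; ring
  set H : ℝ → ℝ := fun t => ∫ s in (0:ℝ)..t, h s with hH
  have hHd : ∀ t : ℝ, HasDerivAt H (h t) t := fun t =>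
    intervalIntegral.integral_hasDerivAt_right (hh.intervalIntegrable _ _)
      (hh.stronglyMeasurableAtFilter _ _) hh.continuousAt
  have hHc : Continuous H := continuous_iff_continuousAt.2 fun t => (hHd t).continuousAt
  have hHnn : ∀ t, 0 ≤ t → 0 ≤ H t := fun t ht =>
    intervalIntegral.integral_nonneg ht (fun s _ => hhnn s)
  have h0mem : (0:ℝ) ∈ Ico (0:ℝ) R := ⟨le_refl 0, hR⟩
  have hwc : ∀ r ∈ Ico (0:ℝ) R, ContinuousAt w r := fun r hr => (hw r hr).continuousAt
  have hwmono : MonotoneOn w (Ico 0 R) := by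
    apply monotoneOn_of_deriv_nonneg (convex_Ico 0 R)
      (fun r hr => (hwc r hr).continuousWithinAt)
    · intro r hr
      rw [interior_Ico] at hr
      exact (hw r (Ioo_subset_Ico_self hr)).differentiableAt.differentiableWithinAt
    · intro r hr
      rw [interior_Ico] at hr
      rw [(hw r (Ioo_subset_Ico_self hr)).deriv]
      exact hw'nn r (Ioo_subset_Ico_self hr)
  have hwα : ∀ r ∈ Ico (0:ℝ) R, α ≤ w r := fun r hr => by
    rw [← hw0]; exact hwmono h0mem hr hr.1
  have hid1 : ∀ x : ℝ, 0 ≤ x → ((x ^ (p-1)) ^ q) = x ^ p := by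
    intro x hx
    rw [← Real.rpow_mul hx, hpq1]
  have hid2 : ∀ x : ℝ, 0 ≤ x → ((x ^ (p-1)) ^ (q-1)) = x := by
    intro x hx
    rw [← Real.rpow_mul hx, hpq2, Real.rpow_one]
  -- derivative of φ
  have hφd : ∀ x ∈ Ioo (0:ℝ) R,
      HasDerivAt (fun y => ((w' y) ^ (p-1)) ^ q) (q * ((w' x)^(p-1))^(q-1) * d x) x := by
    intro x hx
    exact (Real.hasDerivAt_rpow_const (x := (w' x)^(p-1)) (p := q) (Or.inr hq1.le)).comp x (hd x hx)
  have hψd : ∀ x ∈ Ioo (0:ℝ) R,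
      HasDerivAt (fun y => M * q * H (w y) - ((w' y) ^ (p-1)) ^ q)
        (M * q * (h (w x) * w' x) - q * ((w' x)^(p-1))^(q-1) * d x) x := by
    intro x hx
    have hx' : x ∈ Ico (0:ℝ) R := ⟨hx.1.le, hx.2⟩
    exact (((hHd (w x)).comp x (hw x hx')).const_mul (M*q)).sub (hφd x hx)
  have hψmono : MonotoneOn (fun y => M * q * H (w y) - ((w' y) ^ (p-1)) ^ q) (Ioo 0 R) := by
    apply monotoneOn_of_deriv_nonneg (convex_Ioo 0 R)
    · intro x hx; exact (hψd x hx).continuousAt.continuousWithinAt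
    · intro x hx; rw [interior_Ioo] at hx
      exact (hψd x hx).differentiableAt.differentiableWithinAt
    · intro x hx; rw [interior_Ioo] at hx
      rw [(hψd x hx).deriv]
      have hx' : x ∈ Ico (0:ℝ) R := ⟨hx.1.le, hx.2⟩
      rw [hid2 _ (hw'nn x hx')]
      have h2 : w' x * d x ≤ w' x * (M * h (w x)) :=
        mul_le_mul_of_nonneg_left (hdle x hx) (hw'nn x hx')
      nlinarith [hq0]
  -- Lemma A
  have hA : ∀ r ∈ Ico (0:ℝ) R, (w' r) ^ p ≤ M * q * H (w r) := by
    intro r hr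
    rcases eq_or_lt_of_le hr.1 with h0 | h0
    · rw [← h0, hw'0, Real.zero_rpow hp0.ne']
      exact mul_nonneg (mul_nonneg hM.le hq0.le) (hHnn _ (by rw [hw0]; exact hα.le))
    · have hrIoo : r ∈ Ioo (0:ℝ) R := ⟨h0, hr.2⟩
      refine le_of_forall_pos_le_add ?_
      intro ε hε
      set δ : ℝ := ε ^ (1/p) with hδ
      have hδ0 : 0 < δ := Real.rpow_pos_of_pos hε _
      have hslope : Tendsto (slope w 0) (𝓝[>] 0) (𝓝 0) := by
        have h1 := hasDerivAt_iff_tendsto_slope.1 (hw 0 h0mem)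
        rw [hw'0] at h1
        exact h1.mono_left (nhdsWithin_mono 0 (fun x hx => by simpa using (ne_of_gt hx)))
      have hev : ∀ᶠ b in 𝓝[>] (0:ℝ), slope w 0 b < δ := hslope.eventually_lt_const hδ0
      have hbmem : Ioo (0:ℝ) r ∈ 𝓝[>] (0:ℝ) := Ioo_mem_nhdsGT_of_mem ⟨le_refl 0, h0⟩
      obtain ⟨b, hb1, hb2⟩ := (hev.and (eventually_of_mem hbmem (fun x hx => hx))).exists
      have hbR : b < R := lt_trans hb2.2 hr.2
      obtain ⟨c, hc, hc'⟩ := exists_hasDerivAt_eq_slope w w' hb2.1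
        (fun x hx => (hwc x ⟨hx.1, lt_of_le_of_lt hx.2 hbR⟩).continuousWithinAt)
        (fun x hx => hw x ⟨hx.1.le, hx.2.trans hbR⟩)
      have hcmem : c ∈ Ico (0:ℝ) R := ⟨hc.1.le, lt_trans hc.2 hbR⟩
      have hwcδ : w' c < δ := by
        rw [hc', ← slope_def_field]
        exact hb1
      have hφc : ((w' c)^(p-1))^q ≤ ε := by
        rw [hid1 _ (hw'nn c hcmem)]
        calc (w' c)^p ≤ δ ^ p := Real.rpow_le_rpow (hw'nn c hcmem) hwcδ.le hp0.le
          _ = ε := by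
            rw [hδ, ← Real.rpow_mul hε.le, one_div, inv_mul_cancel₀ hp0.ne', Real.rpow_one]
      have hmm := hψmono (⟨hc.1, lt_trans hc.2 hbR⟩ : c ∈ Ioo (0:ℝ) R) hrIoo
        (lt_trans hc.2 hb2.2).le
      simp only at hmm
      have hHwc : 0 ≤ H (w c) := hHnn _ (le_trans hα.le (hwα c hcmem))
      have hφr : ((w' r)^(p-1))^q = (w' r) ^ p := hid1 _ (hw'nn r hr)
      rw [hφr] at hmm
      nlinarith [mul_nonneg (mul_nonneg hM.le hq0.le) hHwc]
  -- Lemma B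
  set C : ℝ := (M*q) ^ (1/p) with hC
  have hC0 : 0 ≤ C := Real.rpow_nonneg (mul_nonneg hM.le hq0.le) _
  have hB : ∀ ε, 0 < ε → ∀ r ∈ Ico (0:ℝ) R, w' r ≤ C * (H (w r) + ε) ^ (1/p) := by
    intro ε hε r hr
    have h1 : (w' r)^p ≤ M*q*(H (w r) + ε) := by
      have := hA r hr; nlinarith [mul_pos hM hq0]
    have h2 : w' r = ((w' r)^p)^(1/p) := by
      rw [← Real.rpow_mul (hw'nn r hr), mul_one_div, div_self hp0.ne', Real.rpow_one]
    have hHε : 0 ≤ H (w r) + ε := by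
      have := hHnn _ (le_trans hα.le (hwα r hr)); linarith
    calc w' r = ((w' r)^p)^(1/p) := h2
      _ ≤ (M*q*(H (w r)+ε))^(1/p) :=
          Real.rpow_le_rpow (Real.rpow_nonneg (hw'nn r hr) _) h1 (by positivity)
      _ = C * (H (w r)+ε)^(1/p) := Real.mul_rpow (mul_nonneg hM.le hq0.le) hHε
  -- the per-ε integral bound, with max to keep continuity
  have hE : ∀ ε, 0 < ε →
      (∫⁻ t in Ioi α, ENNReal.ofReal ((max (H t) 0 + ε) ^ (-(1/p)))) ≤
        ENNReal.ofReal (C * R) := by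
    intro ε hε
    set gE : ℝ → ℝ := fun t => (max (H t) 0 + ε) ^ (-(1/p)) with hgE
    have hbase : ∀ t : ℝ, 0 < max (H t) 0 + ε := fun t => by positivity
    have hgEc : Continuous gE :=
      ((hHc.max continuous_const).add continuous_const).rpow_const (fun t => Or.inl (hbase t).ne')
    have hgEnn : ∀ t, 0 ≤ gE t := fun t => Real.rpow_nonneg (hbase t).le _
    have hgEi : ∀ a b : ℝ, IntervalIntegrable gE volume a b := fun a b => hgEc.intervalIntegrable a b
    have hGd : ∀ x : ℝ, HasDerivAt (fun u => ∫ t in α..u, gE t) (gE x) x := fun x =>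
      intervalIntegral.integral_hasDerivAt_right (hgEi _ _)
        (hgEc.stronglyMeasurableAtFilter _ _) hgEc.continuousAt
    have hkey : MonotoneOn (fun r => C * r - ∫ t in α..(w r), gE t) (Ico 0 R) := by
      apply monotoneOn_of_deriv_nonneg (convex_Ico 0 R)
      · apply ContinuousOn.sub (continuous_const.mul continuous_id).continuousOn
        intro r hr
        exact ((hGd (w r)).continuousAt.comp (hwc r hr)).continuousWithinAt
      · intro r hr; rw [interior_Ico] at hr
        have hr' : r ∈ Ico (0:ℝ) R := Ioo_subset_Ico_self hr
        exact (((hasDerivAt_id r).const_mul C).sub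
          ((hGd (w r)).comp r (hw r hr'))).differentiableAt.differentiableWithinAt
      · intro r hr; rw [interior_Ico] at hr
        have hr' : r ∈ Ico (0:ℝ) R := Ioo_subset_Ico_self hr
        have hder : HasDerivAt (fun r => C * r - ∫ t in α..(w r), gE t)
            (C * 1 - gE (w r) * w' r) r :=
          ((hasDerivAt_id r).const_mul C).sub ((hGd (w r)).comp r (hw r hr'))
        rw [hder.deriv]
        have hmax : max (H (w r)) 0 = H (w r) :=
          max_eq_left (hHnn _ (le_trans hα.le (hwα r hr')))
        have hHε : 0 < H (w r) + ε := by
          have := hHnn _ (le_trans hα.le (hwα r hr')); linarith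
        have hstep : gE (w r) * w' r ≤ C := by
          have h1 : w' r ≤ C * (H (w r) + ε) ^ (1/p) := hB ε hε r hr'
          have h2 : gE (w r) = (H (w r) + ε) ^ (-(1/p)) := by rw [hgE]; simp [hmax]
          rw [h2]
          calc (H (w r) + ε) ^ (-(1/p)) * w' r
              ≤ (H (w r) + ε) ^ (-(1/p)) * (C * (H (w r) + ε) ^ (1/p)) :=
                mul_le_mul_of_nonneg_left h1 (Real.rpow_nonneg hHε.le _)
            _ = C * ((H (w r) + ε) ^ (-(1/p) + 1/p)) := by
                rw [Real.rpow_add hHε]; ring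
            _ = C := by rw [neg_add_cancel, Real.rpow_zero, mul_one]
        simp only [mul_one]
        linarith [hstep]
    have hΦle : ∀ r ∈ Ico (0:ℝ) R, (∫ t in α..(w r), gE t) ≤ C * R := by
      intro r hr
      have hmm := hkey h0mem hr hr.1
      simp only [hw0, intervalIntegral.integral_same, mul_zero, sub_zero] at hmm
      have hCr : C * r ≤ C * R := mul_le_mul_of_nonneg_left hr.2.le hC0
      linarith
    have hsur : ∀ x : ℝ, (∫ t in α..x, gE t) ≤ C * R := by
      intro x
      rcases le_or_gt x α with hx | hx
      · have h1 : 0 ≤ ∫ t in x..α, gE t :=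
          intervalIntegral.integral_nonneg hx (fun t _ => hgEnn t)
        rw [intervalIntegral.integral_symm]
        have := mul_nonneg hC0 hR.le
        linarith
      · obtain ⟨r, hrx, hrm⟩ : ∃ r, x ≤ w r ∧ r ∈ Ico (0:ℝ) R := by
          have h1 : ∀ᶠ r in 𝓝[<] R, x ≤ w r := hblow.eventually_ge_atTop x
          have h2 : Ioo (0:ℝ) R ∈ 𝓝[<] R := Ioo_mem_nhdsLT_of_mem ⟨hR, le_refl R⟩
          obtain ⟨r, h1r, h2r⟩ := (h1.and (eventually_of_mem h2 fun y hy => hy)).exists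
          exact ⟨r, h1r, Ioo_subset_Ico_self h2r⟩
        have hsplit : (∫ t in α..x, gE t) + (∫ t in x..(w r), gE t) = ∫ t in α..(w r), gE t :=
          intervalIntegral.integral_add_adjacent_intervals (hgEi _ _) (hgEi _ _)
        have hnn : 0 ≤ ∫ t in x..(w r), gE t :=
          intervalIntegral.integral_nonneg hrx (fun t _ => hgEnn t)
        linarith [hΦle r hrm]
    have hInt : IntegrableOn gE (Ioi α) := by
      apply integrableOn_Ioi_of_intervalIntegral_norm_bounded (C*R) α
        (fun i : ℝ => hgEc.integrableOn_Ioc) tendsto_id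
      filter_upwards with i
      have hnorm : ∀ x, ‖gE x‖ = gE x := fun x => Real.norm_of_nonneg (hgEnn x)
      simp only [hnorm]
      exact hsur i
    have hIle : (∫ t in Ioi α, gE t) ≤ C * R := by
      have ht := intervalIntegral_tendsto_integral_Ioi α hInt (tendsto_id (α := ℝ))
      exact le_of_tendsto ht (Eventually.of_forall hsur)
    have hlint : (∫⁻ t in Ioi α, ENNReal.ofReal (gE t)) = ENNReal.ofReal (∫ t in Ioi α, gE t) :=
      (ofReal_integral_eq_lintegral_ofReal hInt (ae_of_all _ hgEnn)).symm
    rw [show (fun t => ENNReal.ofReal ((max (H t) 0 + ε) ^ (-(1/p)))) =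
      (fun t => ENNReal.ofReal (gE t)) from rfl]
    rw [hlint]
    exact ENNReal.ofReal_le_ofReal hIle
  -- final assembly
  have hRHS : (M * p / (p-1)) ^ (1/p) * R = C * R := by rw [hC, hq, mul_div_assoc]
  rw [hRHS]
  have hFmeas : ∀ n : ℕ, Measurable
      (fun t => ENNReal.ofReal ((max (H t) 0 + 1/((n:ℝ)+1)) ^ (-(1/p)))) := by
    intro n
    apply ENNReal.measurable_ofReal.comp
    exact (((hHc.max continuous_const).add continuous_const).rpow_const
      (fun t => Or.inl (by positivity : (0:ℝ) < max (H t) 0 + 1/((n:ℝ)+1)).ne')).measurable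
  have hFmono : Monotone (fun (n : ℕ) (t : ℝ) =>
      ENNReal.ofReal ((max (H t) 0 + 1/((n:ℝ)+1)) ^ (-(1/p)))) := by
    intro n m hnm
    intro t
    apply ENNReal.ofReal_le_ofReal
    apply Real.rpow_le_rpow_of_nonpos (by positivity)
    · apply add_le_add le_rfl
      apply one_div_le_one_div_of_le (by positivity)
      have : (n:ℝ) ≤ (m:ℝ) := Nat.cast_le.2 hnm
      linarith
    · exact neg_nonpos.2 (by positivity)
  calc (∫⁻ t in Ioi α, ENNReal.ofReal ((H t) ^ (-(1/p))))
      ≤ ∫⁻ t in Ioi α, ⨆ n : ℕ, ENNReal.ofReal ((max (H t) 0 + 1/((n:ℝ)+1)) ^ (-(1/p))) := by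
        apply lintegral_mono_ae
        rw [ae_restrict_iff' measurableSet_Ioi]
        apply ae_of_all
        intro t ht
        have htnn : 0 ≤ H t := hHnn t (le_trans hα.le (le_of_lt ht))
        rcases eq_or_lt_of_le htnn with h0 | h0
        · rw [← h0, Real.zero_rpow (by simp [hp0.ne'] : -(1/p) ≠ 0)]
          simp
        · have h1 : Tendsto (fun n : ℕ => max (H t) 0 + 1/((n:ℝ)+1)) atTop (𝓝 (H t)) := by
            have h2 := (tendsto_const_nhds (x := max (H t) 0) (f := atTop (α := ℕ))).add
              tendsto_one_div_add_atTop_nhds_zero_nat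
            simpa [max_eq_left htnn] using h2
          have h2 : ContinuousAt (fun x : ℝ => x ^ (-(1/p))) (H t) :=
            Real.continuousAt_rpow_const _ _ (Or.inl h0.ne')
          have hlim : Tendsto (fun n : ℕ =>
              ENNReal.ofReal ((max (H t) 0 + 1/((n:ℝ)+1)) ^ (-(1/p)))) atTop
              (𝓝 (ENNReal.ofReal ((H t) ^ (-(1/p))))) :=
            (ENNReal.continuous_ofReal.continuousAt.tendsto.comp (h2.tendsto.comp h1))
          exact le_of_tendsto' hlim (fun n => le_iSup (fun n : ℕ =>
            ENNReal.ofReal ((max (H t) 0 + 1/((n:ℝ)+1)) ^ (-(1/p)))) n)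
    _ = ⨆ n : ℕ, ∫⁻ t in Ioi α,
          ENNReal.ofReal ((max (H t) 0 + 1/((n:ℝ)+1)) ^ (-(1/p))) :=
        lintegral_iSup hFmeas hFmono
    _ ≤ ENNReal.ofReal (C * R) := iSup_le fun n => hE (1/((n:ℝ)+1)) (by positivity)
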